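/- Let f : X → Y be a quotient map between topological spaces, let A ⊆ Y, and suppose f is one-to-one outside A, i.e., the restriction of f to f⁻¹(Y \ A) is injective. Then the restriction of f to f⁻¹(A), viewed as a map f⁻¹(A) → A between the corresponding subspaces, is a quotient map. -/

import Mathlib

universe u

/-- If `f : X → Y` is a quotient map, `A ⊆ Y`, and `f` is one-to-one outside `A`
(i.e. injective on `f ⁻¹' (Y \ A) = f ⁻¹' Aᶜ`), then the restriction of `f` to `f ⁻¹' A`,
viewed as a map `f ⁻¹' A → A` between subspaces, is a quotient map. -/
theorem stmt1 (X Y : Type u) [TopologicalSpace X] [TopologicalSpace Y]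
    (f : X → Y) (hf : Topology.IsQuotientMap f) (A : Set Y)
    (hinj : Set.InjOn f (f ⁻¹' Aᶜ)) :
    Topology.IsQuotientMap (fun x : (f ⁻¹' A : Set X) => (⟨f x.1, x.2⟩ : A)) := by
  set g : (f ⁻¹' A : Set X) → A := fun x => (⟨f x.1, x.2⟩ : A) with hg
  rw [Topology.isQuotientMap_iff, Topology.isCoinducing_iff, and_comm]
  constructor
  · rintro ⟨y, hy⟩
    obtain ⟨x, rfl⟩ := hf.surjective y
    exact ⟨⟨x, hy⟩, rfl⟩
  · intro s; rw [iff_comm]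
    constructor
    · intro hs
      exact hs.preimage ((hf.continuous.comp continuous_subtype_val).subtype_mk _)
    · intro hs
      rw [isOpen_induced_iff] at hs ⊢
      obtain ⟨U, hU, hUeq⟩ := hs
      set V : Set Y := Subtype.val '' s with hV
      have hVA : V ⊆ A := by rintro y ⟨a, ha, rfl⟩; exact a.2
      -- membership in V for points of A
      have hmem : ∀ (y : Y) (hy : y ∈ A), y ∈ V ↔ (⟨y, hy⟩ : A) ∈ s := by
        intro y hy
        constructor
        · rintro ⟨a, ha, rfl⟩
          exact (Subtype.ext rfl : a = ⟨(a : Y), hy⟩) ▸ ha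
        · intro h; exact ⟨⟨y, hy⟩, h, rfl⟩
      -- key equivalence from hUeq
      have hU' : ∀ (x : X) (hx : f x ∈ A), x ∈ U ↔ (⟨f x, hx⟩ : A) ∈ s := by
        intro x hx
        have := Set.ext_iff.mp hUeq ⟨x, hx⟩
        simpa using this
      refine ⟨V ∪ (f '' U \ A), ?_, ?_⟩
      · rw [← hf.isOpen_preimage]
        have key : f ⁻¹' (V ∪ (f '' U \ A)) = U := by
          ext x
          simp only [Set.mem_preimage, Set.mem_union, Set.mem_diff, Set.mem_image]
          constructor
          · rintro (hx | ⟨⟨u, hu, huv⟩, hnA⟩)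
            · have hxA : f x ∈ A := hVA hx
              exact (hU' x hxA).mpr ((hmem (f x) hxA).mp hx)
            · have hxc : x ∈ f ⁻¹' Aᶜ := hnA
              have huc : u ∈ f ⁻¹' Aᶜ := by
                simp only [Set.mem_preimage, Set.mem_compl_iff, huv]; exact hnA
              exact hinj hxc huc huv.symm ▸ hu
          · intro hx
            by_cases hxA : f x ∈ A
            · exact Or.inl ((hmem (f x) hxA).mpr ((hU' x hxA).mp hx))
            · exact Or.inr ⟨⟨x, hx, rfl⟩, hxA⟩
        rw [key]; exact hU
      · ext ⟨y, hy⟩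
        simp only [Set.mem_preimage, Set.mem_union, Set.mem_diff]
        constructor
        · rintro (h | ⟨_, hnA⟩)
          · exact (hmem y hy).mp h
          · exact absurd hy hnA
        · intro h; exact Or.inl ((hmem y hy).mpr h)
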